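/- Let R be a left Artinian ring such that soc(_R R) ≅ _R(R/rad R) as left R-modules. Then R admits a left torsion-free homomorphism χ : R → ℚ/ℤ, i.e., an additive homomorphism whose kernel contains no nonzero left ideal of R. -/

import Mathlib

open DirectSum in
/-- A cyclic semisimple module whose generator's annihilator kills the whole module
admits a torsion-free character into `ℚ/ℤ`. -/
lemma aux_semisimple_torsion_free_char {R M : Type*} [Ring R] [AddCommGroup M] [Module R M]
    [IsSemisimpleModule R M] (m₁ : M)
    (hgen : ∀ c : M, ∃ r : R, r • m₁ = c)
    (hann : ∀ r : R, r • m₁ = 0 → ∀ c : M, r • c = 0) :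
    ∃ ψ : M →+ AddCircle (1 : ℚ), ∀ m : M, (∀ r : R, ψ (r • m) = 0) → m = 0 := by
  classical
  choose lift hlift using hgen
  have hwd : ∀ (r r' : R), r • m₁ = r' • m₁ → ∀ c : M, r • c = r' • c := by
    intro r r' h c
    have h2 := hann (r - r') (by rw [sub_smul, h, sub_self]) c
    rwa [sub_smul, sub_eq_zero] at h2
  -- decompose M into independent simple submodules
  obtain ⟨s, hind, hsup, hsimples⟩ := IsSemisimpleModule.exists_sSupIndep_sSup_simples_eq_top R M
  have hatoms : ∀ m ∈ s, IsAtom m := fun m hm => isSimpleModule_iff_isAtom.mp (hsimples m hm)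
  have hfg : (⊤ : Submodule R M).FG := by
    refine ⟨{m₁}, top_unique fun c _ => ?_⟩
    rw [Finset.coe_singleton, ← hlift c]
    exact Submodule.smul_mem _ _ (Submodule.mem_span_singleton_self m₁)
  have hcomp := (Submodule.fg_iff_compact (⊤ : Submodule R M)).mp hfg
  obtain ⟨t, hts, htle⟩ := (CompleteLattice.isCompactElement_iff_exists_le_sSup_of_le_sSup _ (⊤ : Submodule R M)).mp hcomp s (le_of_eq hsup.symm)
  set ι := {x // x ∈ t}
  let I : ι → Submodule R M := fun i => i.1
  have hindI : iSupIndep I := (sSupIndep_iff (↑t : Set (Submodule R M))).mp (hind.mono hts)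
  have hsupI : ⨆ i, I i = ⊤ := by
    apply top_unique
    refine le_trans htle ?_
    rw [Finset.sup_id_eq_sSup, sSup_eq_iSup']
    exact le_rfl
  have hint : DirectSum.IsInternal I :=
    (isInternal_submodule_iff_iSupIndep_and_iSup_eq_top I).mpr ⟨hindI, hsupI⟩
  let q := LinearEquiv.ofBijective (coeLinearMap I) hint
  let v := q.symm m₁
  let e : ι → M := fun i => (v i : M)
  have hmem : ∀ i, e i ∈ I i := fun i => (v i).2
  have hqv : coeLinearMap I v = m₁ := q.apply_symm_apply m₁
  have hsum : ∑ i, e i = m₁ := by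
    conv_rhs => rw [← hqv, ← DirectSum.sum_univ_of v]
    rw [map_sum]
    exact Finset.sum_congr rfl fun i _ => (coeLinearMap_of I i (v i)).symm
  let w : ι → R := fun i => lift (e i)
  have hw : ∀ i, w i • m₁ = e i := fun i => hlift (e i)
  have hsymm_e : ∀ j, q.symm (e j) = w j • v := by
    intro j
    rw [LinearEquiv.symm_apply_eq, map_smul, show q v = m₁ from q.apply_symm_apply m₁, hw]
  have horth : ∀ i j : ι, j ≠ i → w j • e i = 0 := by
    intro i j hji
    have h0 : q.symm (e j) i = 0 :=
      hint.ofBijective_coeLinearMap_of_mem_ne hji (hmem j)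
    rw [hsymm_e j] at h0
    have h1 : (w j • v) i = w j • v i := DFinsupp.smul_apply _ _ _
    rw [h1] at h0
    simpa using congrArg Subtype.val h0
  have hidem : ∀ j : ι, w j • e j = e j := by
    intro j
    have h0 : q.symm (e j) j = ⟨e j, hmem j⟩ :=
      hint.ofBijective_coeLinearMap_of_mem (hmem j)
    rw [hsymm_e j] at h0
    have h1 : (w j • v) j = w j • v j := DFinsupp.smul_apply _ _ _
    rw [h1] at h0
    simpa using congrArg Subtype.val h0
  have hkill : ∀ i j : ι, j ≠ i → ∀ c : M, (w j * w i) • c = 0 := by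
    intro i j hji c
    apply hann
    rw [mul_smul, hw, horth i j hji]
  -- choose characters
  have hχ : ∀ i : ι, ∃ χ : M →+ AddCircle (1 : ℚ), e i ≠ 0 → χ (e i) ≠ 0 := by
    intro i
    by_cases h : e i = 0
    · exact ⟨0, fun h' => absurd h h'⟩
    · obtain ⟨χ, hχ⟩ := CharacterModule.exists_character_apply_ne_zero_of_ne_zero h
      exact ⟨χ, fun _ => hχ⟩
  choose χ hχ using hχ
  -- the sandwich maps b ↦ w i • (lift b • e i) are additive
  have hlift_smul : ∀ (r : R) (b : M) (c : M), lift (r • b) • c = (r * lift b) • c := by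
    intro r b c
    apply hwd
    rw [hlift, mul_smul, hlift]
  let σ : ι → (M →+ M) := fun i =>
    { toFun := fun b => w i • (lift b • e i)
      map_zero' := by
        show w i • (lift (0 : M) • e i) = 0
        have h0 : lift (0 : M) • e i = (0 : R) • e i := hwd _ _ (by rw [hlift, zero_smul]) _
        rw [h0, zero_smul, smul_zero]
      map_add' := by
        intro b b'
        show w i • (lift (b + b') • e i) = w i • (lift b • e i) + w i • (lift b' • e i)
        have h0 : lift (b + b') • e i = (lift b + lift b') • e i :=
          hwd _ _ (by rw [hlift, add_smul, hlift, hlift]) _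
        rw [h0, add_smul, smul_add] }
  refine ⟨∑ i, (χ i).comp (σ i), fun m hm => ?_⟩
  have hψ : ∀ b : M, (∑ i, (χ i).comp (σ i)) b = ∑ i, χ i (w i • (lift b • e i)) := by
    intro b
    rw [AddMonoidHom.finset_sum_apply]
    rfl
  have hρ0 : ∀ i : ι, lift m • e i = 0 := by
    intro i
    by_contra hne
    have hIi : IsAtom (I i) := hatoms _ (hts i.2)
    have hle : Submodule.span R {lift m • e i} ≤ I i := by
      rw [Submodule.span_le, Set.singleton_subset_iff]
      exact (I i).smul_mem _ (hmem i)
    have hspan_ne : Submodule.span R {lift m • e i} ≠ ⊥ := by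
      simpa [Submodule.span_singleton_eq_bot] using hne
    have hspan_eq : Submodule.span R {lift m • e i} = I i :=
      (hIi.le_iff.mp hle).resolve_left hspan_ne
    have hei_mem : e i ∈ Submodule.span R {lift m • e i} := hspan_eq ▸ hmem i
    obtain ⟨x, hx⟩ := Submodule.mem_span_singleton.mp hei_mem
    -- evaluate at (w i * x) • m
    have h1 := hm (w i * x)
    rw [hψ] at h1
    have hterm : ∀ j : ι, w j • (lift ((w i * x) • m) • e j)
        = ((w j * w i) * (x * lift m)) • e j := by
      intro j
      rw [hlift_smul, ← mul_smul]
      congr 1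
      simp only [mul_assoc]
    have h2 : ∀ j : ι, j ≠ i → χ j (w j • (lift ((w i * x) • m) • e j)) = 0 := by
      intro j hj
      rw [hterm j, mul_smul, hkill i j hj, map_zero]
    have h3 : χ i (w i • (lift ((w i * x) • m) • e i)) = χ i (e i) := by
      congr 1
      rw [hterm i]
      have : ((w i * w i) * (x * lift m)) • e i = w i • (w i • (x • (lift m • e i))) := by
        simp only [← mul_smul, mul_assoc]
      rw [this, hx, hidem, hidem]
    rw [Finset.sum_eq_single i (fun j _ hj => h2 j hj) (by simp)] at h1
    rw [h3] at h1
    have hei_ne : e i ≠ 0 := by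
      intro h0
      rw [h0, smul_zero] at hne
      exact hne rfl
    exact hχ i hei_ne h1
  calc m = lift m • m₁ := (hlift m).symm
    _ = lift m • ∑ i, e i := by rw [hsum]
    _ = ∑ i, lift m • e i := Finset.smul_sum
    _ = 0 := by simp [hρ0]

/-- If `R` is a left Artinian ring whose left socle `soc(_R R)` (the sum of all minimal
left ideals) is isomorphic as a left `R`-module to `R/rad R`, then `R` admits a left
torsion-free additive homomorphism `χ : R → ℚ/ℤ`, i.e. one whose kernel contains no
nonzero left ideal. -/
theorem exists_left_torsion_free_hom_of_socle_iso {R : Type*} [Ring R] [IsArtinianRing R]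
    (hsoc : Nonempty ((sSup {I : Ideal R | IsAtom I} : Ideal R) ≃ₗ[R]
      R ⧸ (Ideal.jacobson (⊥ : Ideal R)))) :
    ∃ χ : R →+ AddCircle (1 : ℚ), ∀ I : Ideal R, (∀ x ∈ I, χ x = 0) → I = ⊥ := by
  classical
  obtain ⟨eiso⟩ := hsoc
  set J := Ideal.jacobson (⊥ : Ideal R) with hJdef
  set soc := (sSup {I : Ideal R | IsAtom I} : Ideal R) with hsocdef
  -- the socle is a semisimple `R`-module, hence so is `R ⧸ J`
  haveI hsemi_soc : IsSemisimpleModule R ↥soc := by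
    have h1 : ∀ I ∈ {I : Ideal R | IsAtom I}, IsSemisimpleModule R ↥I := by
      intro I hI
      haveI : IsSimpleModule R ↥I := isSimpleModule_iff_isAtom.mpr hI
      infer_instance
    have h2 := isSemisimpleModule_biSup_of_isSemisimpleModule_submodule
      (s := {I : Ideal R | IsAtom I}) (p := fun I : Ideal R => I) h1
    have h3 : (⨆ I ∈ {I : Ideal R | IsAtom I}, I) = soc := sSup_eq_iSup.symm
    rwa [h3] at h2
  haveI hsemi_S : IsSemisimpleModule R (R ⧸ J) := IsSemisimpleModule.congr eiso.symm
  -- `J` annihilates every semisimple module, in particular `R ⧸ J`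
  have hsimple_ann : ∀ (T : Submodule R (R ⧸ J)), IsSimpleModule R ↥T →
      ∀ c ∈ T, ∀ r ∈ J, r • c = 0 := by
    intro T hT c hc r hr
    by_cases hc0 : c = 0
    · rw [hc0, smul_zero]
    · haveI := hT
      have hne0 : (⟨c, hc⟩ : ↥T) ≠ 0 := by simpa using hc0
      have hmax : Ideal.IsMaximal
          (LinearMap.ker (LinearMap.toSpanSingleton R ↥T ⟨c, hc⟩)) :=
        IsSimpleModule.ker_toSpanSingleton_isMaximal (M := ↥T) R hne0
      have hJle : J ≤ LinearMap.ker (LinearMap.toSpanSingleton R ↥T ⟨c, hc⟩) :=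
        sInf_le ⟨bot_le, hmax⟩
      have h1 := hJle hr
      rw [LinearMap.mem_ker] at h1
      have h2 := congrArg Subtype.val h1
      simpa using h2
  have hJann : ∀ r ∈ J, ∀ c : R ⧸ J, r • c = 0 := by
    intro r hr c
    have hc : c ∈ (⨆ T : {T : Submodule R (R ⧸ J) // IsSimpleModule R ↥T}, (T : Submodule R (R ⧸ J))) := by
      have h1 : (⨆ T : {T : Submodule R (R ⧸ J) // IsSimpleModule R ↥T}, (T : Submodule R (R ⧸ J)))
          = sSup {T : Submodule R (R ⧸ J) | IsSimpleModule R ↥T} := (sSup_eq_iSup' _).symm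
      rw [h1, IsSemisimpleModule.sSup_simples_eq_top R (R ⧸ J)]
      trivial
    refine Submodule.iSup_induction (motive := fun z => r • z = 0) _ hc (fun T x hx => hsimple_ann T.1 T.2 x hx r hr)
      (smul_zero r) ?_
    intro x y hx hy
    rw [smul_add, hx, hy, add_zero]
  -- apply the character construction to `R ⧸ J`
  obtain ⟨ψ, hψ⟩ := aux_semisimple_torsion_free_char
    (R := R) (M := R ⧸ J) (Submodule.Quotient.mk 1)
    (fun c => by
      obtain ⟨y, rfl⟩ := Submodule.Quotient.mk_surjective J c
      exact ⟨y, by rw [← Submodule.Quotient.mk_smul, smul_eq_mul, mul_one]⟩)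
    (fun r hr c => by
      apply hJann r _ c
      rw [← Submodule.Quotient.mk_smul, smul_eq_mul, mul_one] at hr
      exact (Submodule.Quotient.mk_eq_zero J).mp hr)
  -- transport along the iso and extend to `R` by divisibility of `ℚ/ℤ`
  let χ₀ : CharacterModule ↥soc := ψ.comp eiso.toLinearMap.toAddMonoidHom
  let f : ↥soc →ₗ[ℤ] R := soc.subtype.toAddMonoidHom.toIntLinearMap
  have hfinj : Function.Injective f := fun a b h => Subtype.ext h
  obtain ⟨χ, hχ⟩ := CharacterModule.dual_surjective_of_injective f hfinj χ₀
  have hχ' : ∀ m : ↥soc, χ (m : R) = ψ (eiso m) := by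
    intro m
    have h := DFunLike.congr_fun hχ m
    exact h
  refine ⟨χ, fun I hI => ?_⟩
  by_contra hne
  haveI : IsAtomic (Ideal R) :=
    isAtomic_of_orderBot_wellFounded_lt (wellFounded_lt (α := Ideal R))
  obtain ⟨A, hA, hAle⟩ := (eq_bot_or_exists_atom_le I).resolve_left hne
  have hAsoc : A ≤ soc := le_sSup hA
  have hzero : ∀ a ∈ A, a = 0 := by
    intro a haA
    have hm : a ∈ soc := hAsoc haA
    have hz : eiso ⟨a, hm⟩ = 0 := by
      apply hψ
      intro r
      have hmem' : r • a ∈ soc := soc.smul_mem r hm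
      have h1 : r • eiso ⟨a, hm⟩ = eiso ⟨r • a, hmem'⟩ := by
        rw [show (⟨r • a, hmem'⟩ : ↥soc) = r • (⟨a, hm⟩ : ↥soc) from rfl, map_smul]
      rw [h1, ← hχ' ⟨r • a, hmem'⟩]
      exact hI (r • a) (I.smul_mem r (hAle haA))
    have h2 : (⟨a, hm⟩ : ↥soc) = 0 := by
      apply eiso.injective
      simpa using hz
    simpa using congrArg Subtype.val h2
  exact hA.1 ((Submodule.eq_bot_iff A).mpr hzero)
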